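/- Let r be a natural number, R = ℚ[x_1, …, x_r] the polynomial ring in r variables over ℚ, and regard ℚ as an R-module via evaluation of all variables at 0. Then ℚ has injective dimension at most r as an R-module: there is an exact sequence of R-modules 0 → ℚ → E_0 → E_1 → ⋯ → E_r → 0 in which each E_s is an injective R-module. -/

import Mathlib

open CategoryTheory


open MvPolynomial Finset

noncomputable section KD

abbrev PR (r : ℕ) := MvPolynomial (Fin r) ℚ

variable {r : ℕ}

lemma hc_monomial (m : ℕ) (μ : Fin r →₀ ℕ) (c : ℚ) :
    homogeneousComponent m (monomial μ c) =
      if μ.degree = m then monomial μ c else 0 := by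
  ext ν
  simp only [coeff_homogeneousComponent, apply_ite (coeff ν), coeff_monomial, coeff_zero]
  by_cases h : ν = μ
  · subst h; rfl
  · simp only [if_neg (show ¬ μ = ν from fun e => h e.symm), ite_self]

lemma degree_eq_sum_univ (μ : Fin r →₀ ℕ) : μ.degree = ∑ i : Fin r, μ i := by
  refine Finset.sum_subset (Finset.subset_univ _) ?_
  intro i _ h
  simpa using Finsupp.notMem_support_iff.mp h

lemma X_mul_monomial' (i : Fin r) (μ : Fin r →₀ ℕ) (c : ℚ) :
    X i * monomial μ c = monomial (Finsupp.single i 1 + μ) c := by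
  rw [X, monomial_mul, one_mul]

lemma euler_monomial (μ : Fin r →₀ ℕ) (c : ℚ) :
    ∑ i : Fin r, X i * pderiv i (monomial μ c) = μ.degree • monomial μ c := by
  have key : ∀ i : Fin r, X i * pderiv i (monomial μ c) = μ i • monomial μ c := by
    intro i
    rw [pderiv_monomial]
    by_cases h : μ i = 0
    · simp [h]
    · rw [X_mul_monomial']
      have : Finsupp.single i 1 + (μ - Finsupp.single i 1) = μ := by
        ext j
        by_cases hj : j = i
        · subst hj
          simp only [Finsupp.add_apply, Finsupp.tsub_apply, Finsupp.single_eq_same]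
          omega
        · simp [Finsupp.single_apply, Ne.symm hj, Finsupp.add_apply, Finsupp.tsub_apply]
      rw [this, smul_monomial, nsmul_eq_mul, mul_comm]
  rw [Finset.sum_congr rfl fun i _ => key i, ← Finset.sum_smul]
  rw [degree_eq_sum_univ]

lemma euler_hc (m : ℕ) (p : PR r) :
    ∑ i : Fin r, X i * pderiv i (homogeneousComponent m p) =
      m • homogeneousComponent m p := by
  induction p using MvPolynomial.induction_on' with
  | monomial μ c =>
      rw [hc_monomial]
      split_ifs with h
      · rw [← h]; exact euler_monomial μ c
      · simp
  | add p q hp hq =>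
      simp only [map_add, mul_add, Finset.sum_add_distrib, smul_add, hp, hq]

lemma hc_X_mul (m : ℕ) (i : Fin r) (g : PR r) :
    homogeneousComponent (m + 1) (X i * g) = X i * homogeneousComponent m g := by
  induction g using MvPolynomial.induction_on' with
  | monomial μ c =>
      rw [X_mul_monomial', hc_monomial, hc_monomial]
      have hdeg : (Finsupp.single i 1 + μ).degree = μ.degree + 1 := by
        rw [degree_eq_sum_univ, degree_eq_sum_univ]
        simp only [Finsupp.add_apply, Finsupp.single_apply, Finset.sum_add_distrib,
          Finset.sum_ite_eq, Finset.mem_univ, if_true]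
        omega
      split_ifs with h1 h2 h3
      · rw [X_mul_monomial']
      · omega
      · omega
      · simp
  | add p q hp hq =>
      simp only [mul_add, map_add, hp, hq]


open MvPolynomial Finset
noncomputable section KD2
variable {r : ℕ}

def sgn (i : Fin r) (J : Finset (Fin r)) : ℚ :=
  (-1 : ℚ) ^ (J.filter (fun j => j < i)).card

lemma sgn_mul_self (i : Fin r) (J : Finset (Fin r)) : sgn i J * sgn i J = 1 := by
  unfold sgn; rw [← pow_add]; exact Even.neg_one_pow (Even.add_self _)

lemma sgn_insert (i j : Fin r) (J : Finset (Fin r)) (h : j ∉ J) :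
    sgn i (insert j J) = (if j < i then -1 else 1) * sgn i J := by
  unfold sgn
  rw [Finset.filter_insert]
  split_ifs with hj
  · rw [Finset.card_insert_of_notMem (fun hm => h (Finset.mem_filter.mp hm).1), pow_succ]
    ring
  · rw [one_mul]

lemma sgn_swap (i j : Fin r) (J : Finset (Fin r)) (hij : i ≠ j)
    (hi : i ∉ J) (hj : j ∉ J) :
    sgn i (insert j J) * sgn j (insert i J) = -(sgn i J * sgn j J) := by
  rw [sgn_insert i j J hj, sgn_insert j i J hi]
  rcases hij.lt_or_gt with h | h
  · rw [if_neg (asymm h), if_pos h]; ring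
  · rw [if_pos h, if_neg (asymm h)]; ring

/-- ungraded Koszul differential -/
def Dfun (F : Finset (Fin r) → PR r) (I : Finset (Fin r)) : PR r :=
  ∑ i : Fin r, if i ∈ I then 0 else sgn i I • (X i * F (insert i I))

/-- ungraded homotopy -/
def Hfun (F : Finset (Fin r) → PR r) (J : Finset (Fin r)) : PR r :=
  ∑ j : Fin r, if j ∈ J then sgn j (J.erase j) • pderiv j (F (J.erase j)) else 0

lemma half_cancel {M : Type*} [AddCommGroup M] [Module ℚ M] {x : M}
    (h : x + x = 0) : x = 0 := by
  calc x = ((2:ℚ)⁻¹ + (2:ℚ)⁻¹) • x := by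
        rw [show (2:ℚ)⁻¹ + (2:ℚ)⁻¹ = 1 by norm_num, one_smul]
    _ = (2:ℚ)⁻¹ • (x + x) := by rw [add_smul, smul_add]
    _ = 0 := by rw [h, smul_zero]

lemma Dfun_Dfun (F : Finset (Fin r) → PR r) (I : Finset (Fin r)) :
    Dfun (Dfun F) I = 0 := by
  classical
  set g : Fin r → Fin r → PR r := fun i j =>
    if i ∈ I then 0 else if j ∈ insert i I then 0 else
      (sgn i I * sgn j (insert i I)) • (X i * (X j * F (insert j (insert i I)))) with hg
  have hD : Dfun (Dfun F) I = ∑ i : Fin r, ∑ j : Fin r, g i j := by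
    unfold Dfun
    refine Finset.sum_congr rfl fun i _ => ?_
    by_cases hi : i ∈ I
    · simp [hg, hi]
    · rw [if_neg hi]
      rw [Finset.mul_sum, Finset.smul_sum]
      refine Finset.sum_congr rfl fun j _ => ?_
      by_cases hj : j ∈ insert i I
      · simp only [hg, if_neg hi, if_pos hj, mul_zero, smul_zero]
      · simp only [hg, if_neg hi, if_neg hj]
        rw [mul_smul_comm, smul_smul]
  have hanti : ∀ i j, g i j = - g j i := by
    intro i j
    by_cases hi : i ∈ I
    · have e1 : g i j = 0 := by simp only [hg, if_pos hi]
      by_cases hj : j ∈ I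
      · have e2 : g j i = 0 := by simp only [hg, if_pos hj]
        rw [e1, e2, neg_zero]
      · have e2 : g j i = 0 := by
          simp only [hg, if_neg hj, if_pos (Finset.mem_insert_of_mem hi)]
        rw [e1, e2, neg_zero]
    · by_cases hj : j ∈ I
      · have e1 : g i j = 0 := by
          simp only [hg, if_neg hi, if_pos (Finset.mem_insert_of_mem hj)]
        have e2 : g j i = 0 := by simp only [hg, if_pos hj]
        rw [e1, e2, neg_zero]
      · by_cases hij : i = j
        · subst hij
          have e : g i i = 0 := by
            simp only [hg, if_neg hi, if_pos (Finset.mem_insert_self i I)]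
          rw [e, neg_zero]
        · have h1 : ¬ j ∈ insert i I := by
            simp [Finset.mem_insert, hj, Ne.symm hij]
          have h2 : ¬ i ∈ insert j I := by
            simp [Finset.mem_insert, hi, hij]
          simp only [hg, if_neg hi, if_neg hj, if_neg h1, if_neg h2]
          rw [Finset.insert_comm]
          have hs : sgn i I * sgn j (insert i I) = -(sgn j I * sgn i (insert j I)) := by
            rw [sgn_insert j i I hi, sgn_insert i j I hj]
            rcases (Ne.lt_or_gt hij) with h | h
            · rw [if_neg (asymm h), if_pos h]; ring
            · rw [if_pos h, if_neg (asymm h)]; ring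
          rw [hs, neg_smul, neg_inj]
          rw [mul_left_comm (X j) (X i)]
  rw [hD]
  apply half_cancel
  nth_rewrite 2 [Finset.sum_comm]
  rw [← Finset.sum_add_distrib]
  refine Finset.sum_eq_zero fun i _ => ?_
  rw [← Finset.sum_add_distrib]
  refine Finset.sum_eq_zero fun j _ => ?_
  rw [hanti i j, neg_add_cancel]

end KD2
open MvPolynomial Finset
noncomputable section KD3
variable {r : ℕ}

lemma pderiv_X_mul_of_ne {i j : Fin r} (h : j ≠ i) (p : PR r) :
    pderiv j (X i * p) = X i * pderiv j p := by
  rw [pderiv_mul, pderiv_X, Pi.single_eq_of_ne' h]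
  simp

lemma DH_plus_HD (F : Finset (Fin r) → PR r) (I : Finset (Fin r)) :
    Dfun (Hfun F) I + Hfun (Dfun F) I
      = I.card • F I + ∑ i : Fin r, X i * pderiv i (F I) := by
  classical
  set T1 : Fin r → Fin r → PR r := fun i j =>
    if i ∈ I then 0 else if j ∈ insert i I then
      (sgn i I * sgn j ((insert i I).erase j)) •
        (X i * pderiv j (F ((insert i I).erase j))) else 0 with hT1
  set T2 : Fin r → Fin r → PR r := fun j i =>
    if j ∈ I then
      (if i ∈ I.erase j then 0 else
        (sgn j (I.erase j) * sgn i (I.erase j)) •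
          pderiv j (X i * F (insert i (I.erase j))))
    else 0 with hT2
  have hA1 : Dfun (Hfun F) I = ∑ i : Fin r, ∑ j : Fin r, T1 i j := by
    unfold Dfun Hfun
    refine Finset.sum_congr rfl fun i _ => ?_
    by_cases hi : i ∈ I
    · simp only [hT1, if_pos hi, Finset.sum_const_zero]
    · rw [if_neg hi, Finset.mul_sum, Finset.smul_sum]
      refine Finset.sum_congr rfl fun j _ => ?_
      by_cases hj : j ∈ insert i I
      · simp only [hT1, if_neg hi, if_pos hj]
        rw [mul_smul_comm, smul_smul]
      · simp only [hT1, if_neg hi, if_neg hj, mul_zero, smul_zero]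
  have hA2 : Hfun (Dfun F) I = ∑ j : Fin r, ∑ i : Fin r, T2 j i := by
    unfold Hfun Dfun
    refine Finset.sum_congr rfl fun j _ => ?_
    by_cases hj : j ∈ I
    · rw [if_pos hj, map_sum, Finset.smul_sum]
      refine Finset.sum_congr rfl fun i _ => ?_
      by_cases hi : i ∈ I.erase j
      · simp only [hT2, if_pos hj, if_pos hi, map_zero, smul_zero]
      · simp only [hT2, if_pos hj, if_neg hi]
        rw [Derivation.map_smul, smul_smul]
    · simp only [hT2, if_neg hj, Finset.sum_const_zero]
  have hoff : ∀ i j : Fin r, j ≠ i → T1 i j + T2 j i = 0 := by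
    intro i j hji
    by_cases hi : i ∈ I
    · have e1 : T1 i j = 0 := by simp only [hT1, if_pos hi]
      rw [e1, zero_add]
      by_cases hj : j ∈ I
      · have : i ∈ I.erase j := Finset.mem_erase.mpr ⟨fun e => hji e.symm, hi⟩
        simp only [hT2, if_pos hj, if_pos this]
      · simp only [hT2, if_neg hj]
    · by_cases hj : j ∈ I
      · -- main cancellation case
        set J := I.erase j with hJ
        have hiJ : i ∉ J := fun hm => hi (Finset.mem_of_mem_erase hm)
        have hjJ : j ∉ J := Finset.notMem_erase j I
        have hjins : j ∈ insert i I := Finset.mem_insert_of_mem hj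
        have hIJ : insert j J = I := Finset.insert_erase hj
        have hkey : (insert i I).erase j = insert i J := by
          rw [← hIJ, Finset.erase_insert_of_ne (fun e => hji e.symm), hJ, hIJ]
        have e1 : T1 i j =
            (sgn i (insert j J) * sgn j (insert i J)) •
              (X i * pderiv j (F (insert i J))) := by
          simp only [hT1, if_neg hi, if_pos hjins, hkey, hIJ]
        have e2 : T2 j i =
            (sgn j J * sgn i J) • (X i * pderiv j (F (insert i J))) := by
          simp only [hT2, if_pos hj, if_neg hiJ, ← hJ]
          rw [pderiv_X_mul_of_ne hji]
        rw [e1, e2, sgn_swap i j J (fun e => hji e.symm) hiJ hjJ, neg_smul,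
          mul_comm (sgn j J) (sgn i J), neg_add_cancel]
      · have e1 : T1 i j = 0 := by
          have : ¬ j ∈ insert i I := by
            simp only [Finset.mem_insert]
            push_neg
            exact ⟨hji, hj⟩
          simp only [hT1, if_neg hi, if_neg this]
        have e2 : T2 j i = 0 := by simp only [hT2, if_neg hj]
        rw [e1, e2, add_zero]
  have hdiag : ∀ i : Fin r,
      T1 i i + T2 i i = X i * pderiv i (F I) + (if i ∈ I then F I else 0) := by
    intro i
    by_cases hi : i ∈ I
    · have e1 : T1 i i = 0 := by simp only [hT1, if_pos hi]
      have e2 : T2 i i = F I + X i * pderiv i (F I) := by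
        have hni : i ∉ I.erase i := Finset.notMem_erase i I
        simp only [hT2, if_pos hi, if_neg hni]
        rw [Finset.insert_erase hi, pderiv_mul, pderiv_X, Pi.single_eq_same,
          sgn_mul_self, one_smul, one_mul]
      rw [e1, e2, if_pos hi, zero_add]
      ring
    · have e1 : T1 i i = X i * pderiv i (F I) := by
        simp only [hT1, if_neg hi, if_pos (Finset.mem_insert_self i I),
          Finset.erase_insert hi]
        rw [sgn_mul_self, one_smul]
      have e2 : T2 i i = 0 := by simp only [hT2, if_neg hi]
      rw [e1, e2, if_neg hi, add_zero]
  rw [hA1, hA2, Finset.sum_comm (s := Finset.univ) (t := Finset.univ)]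
  simp only [← Finset.sum_add_distrib]
  have : ∀ j : Fin r, (∑ i : Fin r, (T1 i j + T2 j i))
      = X j * pderiv j (F I) + (if j ∈ I then F I else 0) := by
    intro j
    rw [Finset.sum_eq_single_of_mem j (Finset.mem_univ j)
      (fun i _ hij => hoff i j (Ne.symm hij))]
    exact hdiag j
  rw [Finset.sum_congr rfl fun j _ => this j, Finset.sum_add_distrib]
  rw [Finset.sum_ite_mem, Finset.univ_inter, Finset.sum_const, add_comm]

end KD3
open MvPolynomial Finset
noncomputable section KD4
variable {r : ℕ}

/-- index type: subsets of cardinality `s` -/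
abbrev AA (r s : ℕ) := {I : Finset (Fin r) // I.card = s}

/-- graded piece of the Koszul complex -/
abbrev KK (r s : ℕ) := AA r s → PR r

def extF {s : ℕ} (f : KK r s) : Finset (Fin r) → PR r :=
  fun J => if h : J.card = s then f ⟨J, h⟩ else 0

lemma extF_apply {s : ℕ} (f : KK r s) (I : AA r s) : extF f I.1 = f I := by
  unfold extF
  rw [dif_pos I.2]

lemma extF_add {s : ℕ} (f g : KK r s) :
    extF (f + g) = fun J => extF f J + extF g J := by
  funext J
  unfold extF
  split_ifs with h
  · rfl
  · rw [add_zero]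

lemma extF_smul {s : ℕ} (p : PR r) (f : KK r s) :
    extF (p • f) = fun J => p • extF f J := by
  funext J
  unfold extF
  split_ifs with h
  · rfl
  · rw [smul_zero]

lemma extF_zero {s : ℕ} : extF (0 : KK r s) = fun _ => 0 := by
  funext J
  unfold extF
  split_ifs with h <;> rfl

lemma Dfun_add (F G : Finset (Fin r) → PR r) (I : Finset (Fin r)) :
    Dfun (fun J => F J + G J) I = Dfun F I + Dfun G I := by
  unfold Dfun
  rw [← Finset.sum_add_distrib]
  refine Finset.sum_congr rfl fun i _ => ?_
  split_ifs with h
  · rw [add_zero]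
  · rw [mul_add, smul_add]

lemma Dfun_smul (p : PR r) (F : Finset (Fin r) → PR r) (I : Finset (Fin r)) :
    Dfun (fun J => p • F J) I = p • Dfun F I := by
  unfold Dfun
  rw [Finset.smul_sum]
  refine Finset.sum_congr rfl fun i _ => ?_
  split_ifs with h
  · rw [smul_zero]
  · show sgn i I • (X i * (p • F (insert i I))) = p • sgn i I • (X i * F (insert i I))
    rw [mul_smul_comm, smul_comm]

/-- the graded Koszul differential, `d s : K (s+1) → K s` -/
def dgr (r s : ℕ) : KK r (s + 1) →ₗ[PR r] KK r s where
  toFun f := fun I => Dfun (extF f) I.1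
  map_add' f g := by
    funext I
    show Dfun (extF (f + g)) I.1 = _
    rw [extF_add, Dfun_add]
    rfl
  map_smul' p f := by
    funext I
    show Dfun (extF (p • f)) I.1 = _
    rw [extF_smul, Dfun_smul]
    rfl

/-- the graded homotopy, `h : K s → K (s+1)` (just a function) -/
def hgr {s : ℕ} (f : KK r s) : KK r (s + 1) :=
  fun J => Hfun (extF f) J.1

lemma Dfun_extF {s : ℕ} (f : KK r (s + 1)) :
    Dfun (extF f) = extF (dgr r s f) := by
  funext J
  by_cases h : J.card = s
  · conv_rhs => rw [extF, dif_pos h]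
    rfl
  · conv_rhs => rw [extF, dif_neg h]
    unfold Dfun
    refine Finset.sum_eq_zero fun i _ => ?_
    split_ifs with hi
    · rfl
    · have hc : (insert i J).card = J.card + 1 := Finset.card_insert_of_notMem hi
      have : extF f (insert i J) = 0 := by
        rw [extF, dif_neg]
        omega
      rw [this, mul_zero, smul_zero]

lemma Hfun_extF {s : ℕ} (f : KK r s) :
    Hfun (extF f) = extF (hgr f) := by
  funext J
  by_cases h : J.card = s + 1
  · conv_rhs => rw [extF, dif_pos h]
    rfl
  · conv_rhs => rw [extF, dif_neg h]
    unfold Hfun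
    refine Finset.sum_eq_zero fun j _ => ?_
    split_ifs with hj
    · have h1 : 1 ≤ J.card := Finset.card_pos.mpr ⟨j, hj⟩
      have hc : (J.erase j).card = J.card - 1 := Finset.card_erase_of_mem hj
      have : extF f (J.erase j) = 0 := by
        rw [extF, dif_neg]
        omega
      rw [this, map_zero, smul_zero]
    · rfl

lemma dgr_dgr (s : ℕ) (f : KK r (s + 2)) : dgr r s (dgr r (s + 1) f) = 0 := by
  funext I
  show Dfun (extF (dgr r (s + 1) f)) I.1 = 0
  rw [← Dfun_extF]
  exact Dfun_Dfun (extF f) I.1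

/-- the graded homotopy identity in positive degrees -/
lemma dgr_hgr_identity (s : ℕ) (f : KK r (s + 1)) (I : AA r (s + 1)) :
    dgr r (s + 1) (hgr f) I + hgr (dgr r s f) I
      = (s + 1) • f I + ∑ i : Fin r, X i * pderiv i (f I) := by
  show Dfun (extF (hgr f)) I.1 + Hfun (extF (dgr r s f)) I.1 = _
  rw [← Hfun_extF, ← Dfun_extF, DH_plus_HD, I.2, extF_apply]

/-- the graded homotopy identity in degree 0 -/
lemma dgr_hgr_identity_zero (f : KK r 0) (I : AA r 0) :
    dgr r 0 (hgr f) I = ∑ i : Fin r, X i * pderiv i (f I) := by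
  have hI : I.1 = ∅ := Finset.card_eq_zero.mp I.2
  show Dfun (extF (hgr f)) I.1 = _
  rw [← Hfun_extF]
  have hH : Hfun (Dfun (extF f)) I.1 = 0 := by
    unfold Hfun
    refine Finset.sum_eq_zero fun j _ => ?_
    rw [if_neg]
    rw [hI]
    exact Finset.notMem_empty j
  have := DH_plus_HD (extF f) I.1
  rw [hH, add_zero] at this
  rw [this, extF_apply, hI]
  simp

/-- polynomial-degree components -/
def pcmp {s : ℕ} (m : ℕ) (f : KK r s) : KK r s :=
  fun I => homogeneousComponent m (f I)

lemma cmp_zero {s : ℕ} (m : ℕ) : pcmp m (0 : KK r s) = 0 := by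
  funext I
  show homogeneousComponent m 0 = 0
  rw [map_zero]

lemma extF_cmp {s : ℕ} (m : ℕ) (f : KK r s) :
    extF (pcmp m f) = fun J => homogeneousComponent m (extF f J) := by
  funext J
  unfold extF
  split_ifs with h
  · rfl
  · rw [map_zero]

lemma Dfun_hc (m : ℕ) (F : Finset (Fin r) → PR r) (I : Finset (Fin r)) :
    Dfun (fun J => homogeneousComponent m (F J)) I
      = homogeneousComponent (m + 1) (Dfun F I) := by
  unfold Dfun
  rw [map_sum]
  refine Finset.sum_congr rfl fun i _ => ?_
  split_ifs with h
  · rw [map_zero]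
  · rw [map_smul, hc_X_mul]

lemma dgr_cmp (s m : ℕ) (f : KK r (s + 1)) :
    dgr r s (pcmp m f) = pcmp (m + 1) (dgr r s f) := by
  funext I
  show Dfun (extF (pcmp m f)) I.1 = homogeneousComponent (m + 1) (Dfun (extF f) I.1)
  rw [extF_cmp, Dfun_hc]

lemma hgr_zero {s : ℕ} : hgr (0 : KK r s) = 0 := by
  funext J
  show Hfun (extF 0) J.1 = 0
  rw [extF_zero]
  unfold Hfun
  refine Finset.sum_eq_zero fun j _ => ?_
  split_ifs with h
  · rw [map_zero, smul_zero]
  · rfl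

lemma cmp_decomp {s : ℕ} (f : KK r s) :
    f = ∑ m ∈ Finset.range ((Finset.univ.sup fun I : AA r s => (f I).totalDegree) + 1),
          pcmp m f := by
  set N := Finset.univ.sup fun I : AA r s => (f I).totalDegree with hN
  funext I
  rw [Finset.sum_apply]
  have h1 : (f I).totalDegree + 1 ≤ N + 1 := by
    have h2 : (f I).totalDegree ≤ N := by
      simpa using Finset.le_sup (f := fun I : AA r s => (f I).totalDegree)
        (Finset.mem_univ I)
    omega
  rw [show ∑ m ∈ Finset.range (N + 1), pcmp m f I
      = ∑ m ∈ Finset.range (N + 1), homogeneousComponent m (f I) from rfl]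
  rw [← Finset.sum_subset (Finset.range_subset_range.mpr h1)
    (fun m _ hm => homogeneousComponent_eq_zero m (f I) (by
      simp only [Finset.mem_range] at hm ⊢
      omega))]
  exact (sum_homogeneousComponent (f I)).symm

/-- Exactness of the Koszul complex in positive homological degrees. -/
lemma koszul_exact (s : ℕ) (f : KK r (s + 1)) (hf : dgr r s f = 0) :
    ∃ g : KK r (s + 2), dgr r (s + 1) g = f := by
  set N := Finset.univ.sup fun I : AA r (s + 1) => (f I).totalDegree with hN
  refine ⟨∑ m ∈ Finset.range (N + 1), ((s + 1 + m : ℕ) : ℚ)⁻¹ • hgr (pcmp m f), ?_⟩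
  rw [map_sum]
  have key : ∀ m : ℕ, dgr r (s + 1) (((s + 1 + m : ℕ) : ℚ)⁻¹ • hgr (pcmp m f))
      = pcmp m f := by
    intro m
    rw [LinearMap.map_smul_of_tower]
    have hz : hgr (dgr r s (pcmp m f)) = 0 := by
      rw [dgr_cmp, hf, cmp_zero, hgr_zero]
    funext I
    have hid := dgr_hgr_identity s (pcmp m f) I
    rw [show hgr (dgr r s (pcmp m f)) I = 0 from by rw [hz]; rfl, add_zero] at hid
    have heuler : ∑ i : Fin r, X i * pderiv i (pcmp m f I) = m • pcmp m f I :=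
      euler_hc m (f I)
    rw [Pi.smul_apply, hid, heuler, ← add_nsmul]
    rw [← Nat.cast_smul_eq_nsmul ℚ (s + 1 + m) (pcmp m f I), smul_smul,
      inv_mul_cancel₀ (by positivity), one_smul]
  rw [Finset.sum_congr rfl fun m _ => key m]
  exact (cmp_decomp f).symm

/-- Exactness at the augmentation spot. -/
lemma koszul_exact_zero (f : KK r 0) (hf : ∀ I : AA r 0, constantCoeff (f I) = 0) :
    ∃ g : KK r 1, dgr r 0 g = f := by
  set N := Finset.univ.sup fun I : AA r 0 => (f I).totalDegree with hN
  have hcmp0 : pcmp 0 f = 0 := by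
    funext I
    show homogeneousComponent 0 (f I) = 0
    rw [homogeneousComponent_zero, show coeff 0 (f I) = constantCoeff (f I) from rfl,
      hf I, map_zero]
  refine ⟨∑ m ∈ Finset.range (N + 1), ((m : ℕ) : ℚ)⁻¹ • hgr (pcmp m f), ?_⟩
  rw [map_sum]
  have key : ∀ m : ℕ, dgr r 0 (((m : ℕ) : ℚ)⁻¹ • hgr (pcmp m f)) = pcmp m f := by
    intro m
    rw [LinearMap.map_smul_of_tower]
    funext I
    have hid := dgr_hgr_identity_zero (pcmp m f) I
    have heuler : ∑ i : Fin r, X i * pderiv i (pcmp m f I) = m • pcmp m f I :=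
      euler_hc m (f I)
    rw [Pi.smul_apply, hid, heuler]
    rcases Nat.eq_zero_or_pos m with hm | hm
    · subst hm
      rw [show pcmp 0 f = 0 from hcmp0]
      simp
    · rw [← Nat.cast_smul_eq_nsmul ℚ m (pcmp m f I), smul_smul,
        inv_mul_cancel₀ (by positivity), one_smul]
  rw [Finset.sum_congr rfl fun m _ => key m]
  exact (cmp_decomp f).symm

/-- every value of `dgr` has zero constant terms -/
lemma constantCoeff_dgr (s : ℕ) (g : KK r (s + 1)) (I : AA r s) :
    constantCoeff (dgr r s g I) = 0 := by
  show constantCoeff (Dfun (extF g) I.1) = 0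
  unfold Dfun
  rw [map_sum]
  refine Finset.sum_eq_zero fun i _ => ?_
  split_ifs with h
  · rw [map_zero]
  · rw [constantCoeff_smul, map_mul, constantCoeff_X, zero_mul, smul_zero]

end KD4
open MvPolynomial Finset
noncomputable section KD5
variable {r : ℕ}

/-- the `ℚ`-dual of the Koszul module, as a type synonym to carry the
`PR r`-module structure coming from the source -/
def QD (r s : ℕ) : Type := KK r s →ₗ[ℚ] ℚ

instance : AddCommGroup (QD r s) :=
  inferInstanceAs (AddCommGroup (KK r s →ₗ[ℚ] ℚ))

def QD.mk' {r s : ℕ} (φ : KK r s →ₗ[ℚ] ℚ) : QD r s := φ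

def QD.ap {r s : ℕ} (φ : QD r s) : KK r s →ₗ[ℚ] ℚ := φ

lemma QD.ext' {r s : ℕ} {φ ψ : QD r s} (h : ∀ f, φ.ap f = ψ.ap f) : φ = ψ :=
  LinearMap.ext h

lemma QD.add_ap {r s : ℕ} (φ ψ : QD r s) (f : KK r s) :
    (φ + ψ).ap f = φ.ap f + ψ.ap f := rfl

lemma QD.zero_ap {r s : ℕ} (f : KK r s) : (0 : QD r s).ap f = 0 := rfl

/-- scaling by a polynomial, as a `ℚ`-linear map on `KK r s` -/
def scaleK (r s : ℕ) (p : PR r) : KK r s →ₗ[ℚ] KK r s where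
  toFun f := p • f
  map_add' := smul_add p
  map_smul' q f := smul_comm p q f

instance : SMul (PR r) (QD r s) :=
  ⟨fun p φ => QD.mk' (QD.ap φ ∘ₗ scaleK r s p)⟩

lemma QD.smul_ap {r s : ℕ} (p : PR r) (φ : QD r s) (f : KK r s) :
    (p • φ).ap f = φ.ap (p • f) := rfl

instance : Module (PR r) (QD r s) where
  one_smul φ := QD.ext' fun f => by rw [QD.smul_ap, one_smul]
  mul_smul p q φ := QD.ext' fun f => by
    rw [QD.smul_ap, QD.smul_ap, QD.smul_ap, smul_smul, mul_comm]
  smul_zero p := QD.ext' fun f => by rw [QD.smul_ap, QD.zero_ap, QD.zero_ap]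
  smul_add p φ ψ := QD.ext' fun f => by
    rw [QD.smul_ap, QD.add_ap, QD.add_ap, QD.smul_ap, QD.smul_ap]
  add_smul p q φ := QD.ext' fun f => by
    rw [QD.smul_ap, QD.add_ap, QD.smul_ap, QD.smul_ap, add_smul, map_add]
  zero_smul φ := QD.ext' fun f => by
    rw [QD.smul_ap, zero_smul, map_zero, QD.zero_ap]

/-- the dual differential -/
def Ds (r s : ℕ) : QD r s →ₗ[PR r] QD r (s + 1) where
  toFun φ := QD.mk' (QD.ap φ ∘ₗ (dgr r s).restrictScalars ℚ)
  map_add' φ ψ := QD.ext' fun f => rfl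
  map_smul' p φ := QD.ext' fun f => by
    exact (congrArg (fun x => QD.ap φ x) ((dgr r s).map_smul p f)).symm

lemma Ds_ap (r s : ℕ) (φ : QD r s) (f : KK r (s + 1)) :
    (Ds r s φ).ap f = φ.ap (dgr r s f) := rfl

lemma QD_subsingleton {r s : ℕ} (h : r < s) : Subsingleton (QD r s) := by
  have hempty : IsEmpty (AA r s) := by
    refine ⟨fun I => ?_⟩
    have h1 : I.1.card ≤ r := by
      have := Finset.card_le_univ I.1
      simpa using this
    omega
  have : Subsingleton (KK r s) := by
    refine ⟨fun f g => funext fun I => (hempty.false I).elim⟩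
  exact ⟨fun φ ψ => QD.ext' fun f => by
    rw [Subsingleton.elim f 0, map_zero, map_zero]⟩

/-- extension of `ℚ`-linear functionals along a map whose kernel they kill -/
lemma extend_functional {V W : Type} [AddCommGroup V] [AddCommGroup W]
    [Module ℚ V] [Module ℚ W] (g : V →ₗ[ℚ] W) (φ : V →ₗ[ℚ] ℚ)
    (h : ∀ v, g v = 0 → φ v = 0) : ∃ ψ : W →ₗ[ℚ] ℚ, ∀ v, ψ (g v) = φ v := by
  have hk : LinearMap.ker g ≤ LinearMap.ker φ := fun v hv => h v hv
  obtain ⟨π, hπ⟩ := (LinearMap.range g).subtype.exists_leftInverse_of_injective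
    (Submodule.ker_subtype _)
  refine ⟨((LinearMap.ker g).liftQ φ hk ∘ₗ
    (g.quotKerEquivRange.symm : LinearMap.range g →ₗ[ℚ] V ⧸ LinearMap.ker g)) ∘ₗ π, ?_⟩
  intro v
  have h1 : π (g v) = ⟨g v, LinearMap.mem_range_self g v⟩ := by
    have := LinearMap.congr_fun hπ (⟨g v, LinearMap.mem_range_self g v⟩ : LinearMap.range g)
    simpa using this
  have h2 : g.quotKerEquivRange.symm ⟨g v, LinearMap.mem_range_self g v⟩
      = Submodule.Quotient.mk v := by
    rw [LinearEquiv.symm_apply_eq]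
    exact Subtype.ext (LinearMap.quotKerEquivRange_apply_mk g v).symm
  simp only [LinearMap.comp_apply, h1, LinearEquiv.coe_coe, h2]
  exact Submodule.liftQ_apply _ _ _


/-- inner functional used in the Baer criterion -/
def GGin (r s : ℕ) (Ψ : AA r s → (PR r →ₗ[ℚ] ℚ)) (p : PR r) : QD r s :=
  QD.mk'
    { toFun := fun f => ∑ a : AA r s, Ψ a (p * f a)
      map_add' := fun f f' => by
        simp only [Pi.add_apply, mul_add, map_add]
        rw [Finset.sum_add_distrib]
      map_smul' := fun q f => by
        show (∑ a : AA r s, Ψ a (p * (q • f) a)) = q • ∑ a : AA r s, Ψ a (p * f a)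
        rw [Finset.smul_sum]
        refine Finset.sum_congr rfl fun a _ => ?_
        have h0 : p * (q • f) a = q • (p * f a) := by
          show p * (q • f a) = q • (p * f a)
          rw [mul_smul_comm]
        rw [h0, map_smul] }

lemma GGin_ap (r s : ℕ) (Ψ : AA r s → (PR r →ₗ[ℚ] ℚ)) (p : PR r) (f : KK r s) :
    (GGin r s Ψ p).ap f = ∑ a : AA r s, Ψ a (p * f a) := rfl

/-- the extension map used in the Baer criterion -/
def GG (r s : ℕ) (Ψ : AA r s → (PR r →ₗ[ℚ] ℚ)) : PR r →ₗ[PR r] QD r s where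
  toFun := GGin r s Ψ
  map_add' p p' := QD.ext' fun f => by
    rw [GGin_ap, QD.add_ap, GGin_ap, GGin_ap, ← Finset.sum_add_distrib]
    refine Finset.sum_congr rfl fun a _ => ?_
    rw [add_mul, map_add]
  map_smul' p' p := QD.ext' fun f => by
    rw [GGin_ap, QD.smul_ap, GGin_ap]
    refine Finset.sum_congr rfl fun a _ => ?_
    congr 1
    show p' • p * f a = p * (p' • f) a
    rw [smul_eq_mul]
    show p' * p * f a = p * (p' * f a)
    ring

/-- Baer's criterion for the dual modules -/
lemma baer_QD (r s : ℕ) : Module.Baer (PR r) (QD r s) := by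
  intro I g
  have hext : ∀ a : AA r s, ∃ Ψ : PR r →ₗ[ℚ] ℚ,
      ∀ (p : PR r) (hp : p ∈ I), Ψ p = (g ⟨p, hp⟩).ap (Pi.single a 1) := by
    intro a
    set J := I.restrictScalars ℚ with hJ
    set φa : J →ₗ[ℚ] ℚ :=
      { toFun := fun x => (g ⟨x.1, x.2⟩).ap (Pi.single a 1)
        map_add' := fun x y => by
          show (g ⟨(x + y).1, (x + y).2⟩).ap (Pi.single a 1)
              = (g ⟨x.1, x.2⟩).ap (Pi.single a 1) + (g ⟨y.1, y.2⟩).ap (Pi.single a 1)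
          have h0 : (⟨(x + y).1, (x + y).2⟩ : I) = ⟨x.1, x.2⟩ + ⟨y.1, y.2⟩ := rfl
          rw [h0, map_add, QD.add_ap]
        map_smul' := fun q x => by
          show (g ⟨(q • x).1, (q • x).2⟩).ap (Pi.single a 1)
              = (RingHom.id ℚ) q • (g ⟨x.1, x.2⟩).ap (Pi.single a 1)
          have h1 : (⟨(q • x).1, (q • x).2⟩ : I) = (C q : PR r) • ⟨x.1, x.2⟩ := by
            apply Subtype.ext
            show q • x.1 = C q * x.1
            rw [smul_eq_C_mul]
          rw [h1, map_smul, QD.smul_ap]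
          have h2 : (C q : PR r) • (Pi.single a 1 : KK r s)
              = q • (Pi.single a 1 : KK r s) := by
            funext b
            show (C q : PR r) * (Pi.single a 1 : KK r s) b = q • (Pi.single a 1 : KK r s) b
            rw [smul_eq_C_mul]
          rw [h2, map_smul]
          rfl } with hφa
    obtain ⟨π, hπ⟩ := J.subtype.exists_leftInverse_of_injective (Submodule.ker_subtype _)
    refine ⟨φa ∘ₗ π, fun p hp => ?_⟩
    have h1 : π p = ⟨p, hp⟩ := by
      have := LinearMap.congr_fun hπ (⟨p, hp⟩ : J)
      simpa using this
    simp only [LinearMap.comp_apply, h1]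
    rfl
  choose Ψ hΨ using hext
  refine ⟨GG r s Ψ, fun x hx => QD.ext' fun f => ?_⟩
  rw [show GG r s Ψ x = GGin r s Ψ x from rfl, GGin_ap]
  show ∑ a : AA r s, Ψ a (x * f a) = (g ⟨x, hx⟩).ap f
  have key : ∀ a : AA r s, Ψ a (x * f a) = (g ⟨x, hx⟩).ap (Pi.single a (f a)) := by
    intro a
    have hmem : x * f a ∈ I := I.mul_mem_right (f a) hx
    rw [hΨ a (x * f a) hmem]
    have h1 : (⟨x * f a, hmem⟩ : I) = (f a) • ⟨x, hx⟩ := by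
      apply Subtype.ext
      show x * f a = f a * x
      ring
    rw [h1, map_smul, QD.smul_ap]
    congr 1
    funext b
    by_cases hb : b = a
    · subst hb
      show f b * (Pi.single b (1 : PR r) : KK r s) b = (Pi.single b (f b) : KK r s) b
      rw [Pi.single_eq_same, Pi.single_eq_same, mul_one]
    · show f a * (Pi.single a (1 : PR r) : KK r s) b = (Pi.single a (f a) : KK r s) b
      rw [Pi.single_eq_of_ne hb, Pi.single_eq_of_ne hb, mul_zero]
  rw [Finset.sum_congr rfl fun a _ => key a, ← map_sum]
  congr 1
  exact Finset.univ_sum_single f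

end KD5
open MvPolynomial Finset CategoryTheory
noncomputable section KD6
variable {r : ℕ}

/-- the augmentation functional: constant coefficient at the empty set -/
def epsK (r : ℕ) : KK r 0 →ₗ[ℚ] ℚ where
  toFun f := constantCoeff (f ⟨∅, rfl⟩)
  map_add' f g := by
    show constantCoeff ((f + g) ⟨∅, rfl⟩) = _
    rw [Pi.add_apply, map_add]
  map_smul' q f := by
    show constantCoeff ((q • f) ⟨∅, rfl⟩) = q • constantCoeff (f ⟨∅, rfl⟩)
    rw [Pi.smul_apply, constantCoeff_smul]

def iotaFun (r : ℕ) (q : ℚ) : QD r 0 := QD.mk' (q • epsK r)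

lemma iotaFun_ap (q : ℚ) (f : KK r 0) :
    (iotaFun r q).ap f = q * constantCoeff (f ⟨∅, rfl⟩) := by
  show (q • epsK r) f = q * constantCoeff (f ⟨∅, rfl⟩)
  rw [LinearMap.smul_apply, smul_eq_mul]
  rfl

def oneK (r : ℕ) : KK r 0 := fun _ => 1

lemma iotaFun_add (q₁ q₂ : ℚ) : iotaFun r (q₁ + q₂) = iotaFun r q₁ + iotaFun r q₂ :=
  QD.ext' fun f => by rw [iotaFun_ap, QD.add_ap, iotaFun_ap, iotaFun_ap, add_mul]

lemma iotaFun_smul (p : PR r) (q : ℚ) :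
    iotaFun r (MvPolynomial.eval (0 : Fin r → ℚ) p * q) = p • iotaFun r q :=
  QD.ext' fun f => by
    rw [iotaFun_ap, QD.smul_ap, iotaFun_ap]
    have h1 : (p • f) (⟨∅, rfl⟩ : AA r 0) = p * f ⟨∅, rfl⟩ := rfl
    have h2 : (MvPolynomial.eval (0 : Fin r → ℚ)) p = constantCoeff p :=
      DFunLike.congr_fun MvPolynomial.eval_zero p
    rw [h1, map_mul, h2]
    ring

lemma iotaFun_inj : Function.Injective (iotaFun r) := by
  intro q₁ q₂ h
  have := congrArg (fun φ : QD r 0 => QD.ap φ (oneK r)) h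
  simp only [iotaFun_ap] at this
  have hone : constantCoeff ((oneK r) ⟨∅, rfl⟩) = 1 := map_one _
  rwa [hone, mul_one, mul_one] at this

lemma range_iota_iff (φ : QD r 0) :
    (∃ q : ℚ, iotaFun r q = φ) ↔ Ds r 0 φ = 0 := by
  constructor
  · rintro ⟨q, rfl⟩
    refine QD.ext' fun f => ?_
    rw [Ds_ap, iotaFun_ap, constantCoeff_dgr 0 f ⟨∅, rfl⟩, mul_zero, QD.zero_ap]
  · intro h
    refine ⟨φ.ap (oneK r), QD.ext' fun f => ?_⟩
    set c := constantCoeff (f ⟨∅, rfl⟩) with hc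
    have hzero : ∀ I : AA r 0, constantCoeff ((f - c • oneK r) I) = 0 := by
      intro I
      have hI : I = (⟨∅, rfl⟩ : AA r 0) := Subtype.ext (Finset.card_eq_zero.mp I.2)
      rw [hI]
      show constantCoeff (f ⟨∅, rfl⟩ - c • (oneK r) ⟨∅, rfl⟩) = 0
      rw [map_sub, constantCoeff_smul]
      have hone : constantCoeff ((oneK r) ⟨∅, rfl⟩) = 1 := map_one _
      rw [hone, smul_eq_mul, mul_one, ← hc, sub_self]
    obtain ⟨g, hg⟩ := koszul_exact_zero (f - c • oneK r) hzero
    have h1 : φ.ap (f - c • oneK r) = 0 := by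
      rw [← hg, ← Ds_ap, h, QD.zero_ap]
    rw [map_sub, map_smul, sub_eq_zero] at h1
    rw [iotaFun_ap, ← hc, mul_comm, h1, smul_eq_mul]

lemma exact_Ds_iff (s : ℕ) (φ : QD r (s + 1)) :
    (∃ ψ : QD r s, Ds r s ψ = φ) ↔ Ds r (s + 1) φ = 0 := by
  constructor
  · rintro ⟨ψ, rfl⟩
    refine QD.ext' fun f => ?_
    rw [Ds_ap, Ds_ap, dgr_dgr s f, map_zero, QD.zero_ap]
  · intro h
    have hker : ∀ g : KK r (s + 2), φ.ap (dgr r (s + 1) g) = 0 := fun g => by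
      rw [← Ds_ap, h, QD.zero_ap]
    obtain ⟨ψ₀, hψ₀⟩ := extend_functional ((dgr r s).restrictScalars ℚ) (QD.ap φ)
      (fun v hv => by
        obtain ⟨g, hg⟩ := koszul_exact s v hv
        rw [← hg]
        exact hker g)
    exact ⟨QD.mk' ψ₀, QD.ext' fun f => hψ₀ f⟩

end KD6


/-- The `ℚ[x_1, …, x_r]`-module structure on `ℚ` given by evaluating all variables at `0`. -/
noncomputable def qModule (r : ℕ) : Module (MvPolynomial (Fin r) ℚ) ℚ :=
  Module.compHom ℚ (MvPolynomial.eval (0 : Fin r → ℚ))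

/-- Let `R = ℚ[x_1, …, x_r]` and regard `ℚ` as an `R`-module via
evaluation at `0`.  Then `ℚ` has injective dimension at most `r` as an `R`-module:
there is an exact sequence of `R`-modules `0 → ℚ → E_0 → E_1 → ⋯ → E_r → 0` in which
each `E_s` is an injective `R`-module.  (The modules `E_s` for `s > r` are zero, which
encodes that the sequence stops at `E_r`.) -/
theorem stmt6 (r : ℕ) :
    letI R := MvPolynomial (Fin r) ℚ
    letI : Module R ℚ := qModule r
    ∃ (E : ℕ → ModuleCat R) (ι : ℚ →ₗ[R] E 0) (d : ∀ s : ℕ, E s →ₗ[R] E (s + 1)),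
      (∀ s : ℕ, s ≤ r → Module.Injective R (E s)) ∧
      (∀ s : ℕ, r < s → Subsingleton (E s)) ∧
      Function.Injective ι ∧
      LinearMap.range ι = LinearMap.ker (d 0) ∧
      (∀ s : ℕ, LinearMap.range (d s) = LinearMap.ker (d (s + 1))) := by

  letI : Module (MvPolynomial (Fin r) ℚ) ℚ := qModule r
  refine ⟨fun s => ModuleCat.of (PR r) (ULift (QD r s)),
    ULift.moduleEquiv.symm.toLinearMap ∘ₗ
      { toFun := iotaFun r
        map_add' := iotaFun_add
        map_smul' := fun p q => by
          show iotaFun r (MvPolynomial.eval (0 : Fin r → ℚ) p * q) = p • iotaFun r q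
          exact iotaFun_smul p q },
    fun s => ULift.moduleEquiv.symm.toLinearMap ∘ₗ
      (Ds r s ∘ₗ ULift.moduleEquiv.toLinearMap), ?_, ?_, ?_, ?_, ?_⟩
  · exact fun s _ =>
      Module.ulift_injective_of_injective (PR r) (Module.Baer.injective (baer_QD r s))
  · intro s hs
    haveI := QD_subsingleton (r := r) (s := s) hs
    exact ⟨fun a b => by
      cases a; cases b
      congr 1
      exact Subsingleton.elim _ _⟩
  · exact fun q₁ q₂ h => iotaFun_inj (ULift.moduleEquiv.symm.injective h)
  · ext φ
    simp only [LinearMap.mem_range, LinearMap.mem_ker]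
    constructor
    · rintro ⟨q, rfl⟩
      show ULift.moduleEquiv.symm
        (Ds r 0 (ULift.moduleEquiv (ULift.moduleEquiv.symm (iotaFun r q)))) = 0
      rw [LinearEquiv.apply_symm_apply, (range_iota_iff (iotaFun r q)).mp ⟨q, rfl⟩,
        map_zero]
    · intro h
      have h' : Ds r 0 (ULift.moduleEquiv φ) = 0 :=
        (LinearEquiv.map_eq_zero_iff ULift.moduleEquiv.symm).mp h
      obtain ⟨q, hq⟩ := (range_iota_iff (ULift.moduleEquiv φ)).mpr h'
      refine ⟨q, ?_⟩
      show ULift.moduleEquiv.symm (iotaFun r q) = φ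
      rw [hq]
      exact ULift.moduleEquiv.symm_apply_apply φ
  · intro s
    ext φ
    simp only [LinearMap.mem_range, LinearMap.mem_ker]
    constructor
    · rintro ⟨ψ, rfl⟩
      show ULift.moduleEquiv.symm (Ds r (s + 1) (ULift.moduleEquiv
        (ULift.moduleEquiv.symm (Ds r s (ULift.moduleEquiv ψ))))) = 0
      rw [LinearEquiv.apply_symm_apply,
        (exact_Ds_iff s (Ds r s (ULift.moduleEquiv ψ))).mp ⟨ULift.moduleEquiv ψ, rfl⟩,
        map_zero]
    · intro h
      have h' : Ds r (s + 1) (ULift.moduleEquiv φ) = 0 :=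
        (LinearEquiv.map_eq_zero_iff ULift.moduleEquiv.symm).mp h
      obtain ⟨ψ, hψ⟩ := (exact_Ds_iff s (ULift.moduleEquiv φ)).mpr h'
      refine ⟨(ULift.moduleEquiv (R := PR r) (M := QD r s)).symm ψ, ?_⟩
      show ULift.moduleEquiv.symm (Ds r s (ULift.moduleEquiv
        (ULift.moduleEquiv.symm ψ))) = φ
      rw [LinearEquiv.apply_symm_apply, hψ]
      exact ULift.moduleEquiv.symm_apply_apply φ
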